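/- For any X ∈ B(H) and ν ∈ [0,1], w²(X + (1−2ν)X*) ≤ (1−2ν)² w²(X) + |1−2ν| w(X²) + ((|1−2ν|+1)/2)·‖|X|² + |X*|²‖. -/

import Mathlib

open scoped InnerProductSpace

/-- Numerical radius of a bounded operator on a complex Hilbert space. -/
noncomputable def numRad {H : Type*} [NormedAddCommGroup H] [InnerProductSpace ℂ H]
    (T : H →L[ℂ] H) : ℝ :=
  ⨆ z : {z : H // ‖z‖ = 1}, ‖(⟪T z.1, z.1⟫_ℂ : ℂ)‖

/-- Crawford number. -/
noncomputable def crawford {H : Type*} [NormedAddCommGroup H] [InnerProductSpace ℂ H]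
    (T : H →L[ℂ] H) : ℝ :=
  ⨅ z : {z : H // ‖z‖ = 1}, ‖(⟪T z.1, z.1⟫_ℂ : ℂ)‖

/-- The 2×2 block operator matrix `[[A, B], [C, D]]` acting on `H ⊕ H`
(the ℓ² direct sum `WithLp 2 (H × H)`), sending `(x, y)` to `(Ax + By, Cx + Dy)`. -/
noncomputable def blk {H : Type*} [NormedAddCommGroup H] [InnerProductSpace ℂ H]
    (A B C D : H →L[ℂ] H) : WithLp 2 (H × H) →L[ℂ] WithLp 2 (H × H) :=
  (((WithLp.prodContinuousLinearEquiv 2 ℂ H H).symm.toContinuousLinearMap).comp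
    (((A.comp (ContinuousLinearMap.fst ℂ H H) + B.comp (ContinuousLinearMap.snd ℂ H H)).prod
      (C.comp (ContinuousLinearMap.fst ℂ H H) + D.comp (ContinuousLinearMap.snd ℂ H H))))).comp
    ((WithLp.prodContinuousLinearEquiv 2 ℂ H H).toContinuousLinearMap)

section Aux

variable {H : Type*} [NormedAddCommGroup H] [InnerProductSpace ℂ H]

lemma numRad_nonneg' (T : H →L[ℂ] H) : 0 ≤ numRad T :=
  Real.iSup_nonneg fun _ => norm_nonneg _

lemma numRad_bdd' (T : H →L[ℂ] H) :
    BddAbove (Set.range fun z : {z : H // ‖z‖ = 1} => ‖(⟪T z.1, z.1⟫_ℂ : ℂ)‖) := by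
  refine ⟨‖T‖, ?_⟩
  rintro x ⟨z, rfl⟩
  calc ‖(⟪T z.1, z.1⟫_ℂ : ℂ)‖ ≤ ‖T z.1‖ * ‖z.1‖ := norm_inner_le_norm _ _
    _ ≤ ‖T‖ * ‖z.1‖ * ‖z.1‖ := by
        have := T.le_opNorm z.1
        nlinarith [norm_nonneg z.1]
    _ = ‖T‖ := by rw [z.2]; ring

lemma inner_le_numRad' (T : H →L[ℂ] H) {z : H} (hz : ‖z‖ = 1) :
    ‖(⟪T z, z⟫_ℂ : ℂ)‖ ≤ numRad T :=
  le_ciSup (numRad_bdd' T) (⟨z, hz⟩ : {z : H // ‖z‖ = 1})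

set_option maxHeartbeats 1000000 in
lemma pointwise_bound' [CompleteSpace H] (a : ℝ) (X : H →L[ℂ] H) {z : H} (hz : ‖z‖ = 1) :
    ‖(⟪(X + (a : ℂ) • X.adjoint) z, z⟫_ℂ : ℂ)‖ ^ 2 ≤
      a ^ 2 * ‖(⟪X z, z⟫_ℂ : ℂ)‖ ^ 2 + |a| * ‖(⟪(X * X) z, z⟫_ℂ : ℂ)‖ +
        ((|a| + 1) / 2) * (‖X z‖ ^ 2 + ‖X.adjoint z‖ ^ 2) := by
  set c : ℂ := ⟪X z, z⟫_ℂ with hc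
  set d : ℂ := ⟪(X * X) z, z⟫_ℂ with hd
  set s : ℝ := ‖X z‖ ^ 2 + ‖X.adjoint z‖ ^ 2 with hs
  -- the inner product of T z with z equals c + a * conj c
  have hadj : (⟪X.adjoint z, z⟫_ℂ : ℂ) = (starRingEnd ℂ) c := by
    rw [ContinuousLinearMap.adjoint_inner_left, ← inner_conj_symm]
  have hT : (⟪(X + (a : ℂ) • X.adjoint) z, z⟫_ℂ : ℂ) = c + (a : ℂ) * (starRingEnd ℂ) c := by
    rw [ContinuousLinearMap.add_apply, inner_add_left, ContinuousLinearMap.smul_apply,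
      inner_smul_left, hadj, Complex.conj_ofReal]
  -- inner of X z with adjoint z
  have hXXz : (⟪X z, X.adjoint z⟫_ℂ : ℂ) = d := by
    rw [ContinuousLinearMap.adjoint_inner_right, hd, ContinuousLinearMap.mul_apply]
  -- sum bound: 4 * c.re^2 ≤ s + 2 * d.re
  have hsum : (⟪X z + X.adjoint z, z⟫_ℂ : ℂ) = c + (starRingEnd ℂ) c := by
    rw [inner_add_left, hadj]
  have hdiff : (⟪X z - X.adjoint z, z⟫_ℂ : ℂ) = c - (starRingEnd ℂ) c := by
    rw [inner_sub_left, hadj]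
  have hnormsum : ‖X z + X.adjoint z‖ ^ 2 = s + 2 * d.re := by
    have := norm_add_sq (𝕜 := ℂ) (X z) (X.adjoint z)
    rw [hXXz] at this
    rw [hs, this]; simp only [RCLike.re_to_complex]; ring
  have hnormdiff : ‖X z - X.adjoint z‖ ^ 2 = s - 2 * d.re := by
    have := norm_sub_sq (𝕜 := ℂ) (X z) (X.adjoint z)
    rw [hXXz] at this
    rw [hs, this]; simp only [RCLike.re_to_complex]; ring
  have hre : 4 * c.re ^ 2 ≤ s + 2 * d.re := by
    have h1 : ‖(⟪X z + X.adjoint z, z⟫_ℂ : ℂ)‖ ≤ ‖X z + X.adjoint z‖ * ‖z‖ :=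
      norm_inner_le_norm _ _
    rw [hsum, Complex.add_conj, hz, mul_one] at h1
    have h2 : ‖((2 * c.re : ℝ) : ℂ)‖ = |2 * c.re| := Complex.norm_real _
    rw [h2] at h1
    nlinarith [hnormsum, abs_nonneg (2 * c.re), sq_abs (2 * c.re), norm_nonneg (X z + X.adjoint z)]
  have him : 4 * c.im ^ 2 ≤ s - 2 * d.re := by
    have h1 : ‖(⟪X z - X.adjoint z, z⟫_ℂ : ℂ)‖ ≤ ‖X z - X.adjoint z‖ * ‖z‖ :=
      norm_inner_le_norm _ _
    rw [hdiff, Complex.sub_conj, hz, mul_one] at h1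
    have h2 : ‖((2 * c.im : ℝ) : ℂ) * Complex.I‖ = |2 * c.im| := by
      rw [norm_mul, Complex.norm_I, Complex.norm_real, mul_one, Real.norm_eq_abs]
    rw [h2] at h1
    nlinarith [hnormdiff, abs_nonneg (2 * c.im), sq_abs (2 * c.im), norm_nonneg (X z - X.adjoint z)]
  -- rewrite goal in terms of re/im
  have hcsq : ‖c‖ ^ 2 = c.re ^ 2 + c.im ^ 2 := by
    rw [Complex.sq_norm, Complex.normSq_apply]; ring
  have hTsq : ‖(⟪(X + (a : ℂ) • X.adjoint) z, z⟫_ℂ : ℂ)‖ ^ 2 =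
      (1 + a) ^ 2 * c.re ^ 2 + (1 - a) ^ 2 * c.im ^ 2 := by
    rw [hT, Complex.sq_norm, Complex.normSq_apply]
    simp [Complex.add_re, Complex.add_im, Complex.mul_re, Complex.mul_im,
      Complex.conj_re, Complex.conj_im, Complex.ofReal_re, Complex.ofReal_im]
    ring
  have hdre : |d.re| ≤ ‖d‖ := Complex.abs_re_le_norm d
  rw [hTsq, hcsq]
  clear_value c d s
  have hdre' : d.re ≤ ‖d‖ := le_trans (le_abs_self _) hdre
  have hdre'' : -d.re ≤ ‖d‖ := le_trans (neg_le_abs _) hdre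
  rcases abs_cases a with ⟨hA, ha⟩ | ⟨hA, ha⟩ <;> rw [hA]
  · nlinarith [mul_le_mul_of_nonneg_left hre ha, mul_le_mul_of_nonneg_left hdre' ha,
      mul_nonneg ha (sq_nonneg c.im), hre, him]
  · have ha' : (0:ℝ) ≤ -a := by linarith
    nlinarith [mul_le_mul_of_nonneg_left him ha', mul_le_mul_of_nonneg_left hdre'' ha',
      mul_nonneg ha' (sq_nonneg c.re), hre, him]

end Aux

set_option maxHeartbeats 1000000 in
theorem numRad_sq_skew_le {H : Type*} [NormedAddCommGroup H] [InnerProductSpace ℂ H]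
    [CompleteSpace H] {ν : ℝ} (hν : ν ∈ Set.Icc (0 : ℝ) 1) (X : H →L[ℂ] H) :
    numRad (X + ((1 - 2*ν : ℝ) : ℂ) • X.adjoint) ^ 2 ≤
      (1 - 2*ν) ^ 2 * numRad X ^ 2 + |1 - 2*ν| * numRad (X * X) +
        ((|1 - 2*ν| + 1) / 2) * ‖star X * X + X * star X‖ := by
  set a : ℝ := 1 - 2*ν with haa
  set M : ℝ := a ^ 2 * numRad X ^ 2 + |a| * numRad (X * X) +
      ((|a| + 1) / 2) * ‖star X * X + X * star X‖ with hM
  have hM0 : 0 ≤ M := by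
    have h1 := numRad_nonneg' X
    have h2 := numRad_nonneg' (X * X)
    have h3 : (0:ℝ) ≤ ‖star X * X + X * star X‖ := norm_nonneg _
    have h4 : (0:ℝ) ≤ |a| := abs_nonneg a
    positivity
  -- pointwise bound against M
  have key : ∀ z : {z : H // ‖z‖ = 1},
      ‖(⟪(X + (a : ℂ) • X.adjoint) z.1, z.1⟫_ℂ : ℂ)‖ ^ 2 ≤ M := by
    rintro ⟨z, hz⟩
    have h0 := pointwise_bound' (H := H) a X hz
    have h1 : ‖(⟪X z, z⟫_ℂ : ℂ)‖ ≤ numRad X := inner_le_numRad' X hz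
    have h2 : ‖(⟪(X * X) z, z⟫_ℂ : ℂ)‖ ≤ numRad (X * X) := inner_le_numRad' (X * X) hz
    -- bound s by the norm of the sum
    have h3 : ‖X z‖ ^ 2 + ‖X.adjoint z‖ ^ 2 ≤ ‖star X * X + X * star X‖ := by
      set S : H →L[ℂ] H := star X * X + X * star X with hS
      have hSz : (⟪S z, z⟫_ℂ : ℂ).re = ‖X z‖ ^ 2 + ‖X.adjoint z‖ ^ 2 := by
        have e1 : (⟪(star X * X) z, z⟫_ℂ : ℂ) = ((‖X z‖ ^ 2 : ℝ) : ℂ) := by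
          rw [ContinuousLinearMap.mul_apply, ContinuousLinearMap.star_eq_adjoint,
            ContinuousLinearMap.adjoint_inner_left, inner_self_eq_norm_sq_to_K]
          norm_cast
        have e2 : (⟪(X * star X) z, z⟫_ℂ : ℂ) = ((‖X.adjoint z‖ ^ 2 : ℝ) : ℂ) := by
          rw [ContinuousLinearMap.mul_apply, ContinuousLinearMap.star_eq_adjoint,
            ← ContinuousLinearMap.adjoint_inner_right, inner_self_eq_norm_sq_to_K]
          norm_cast
        rw [hS, ContinuousLinearMap.add_apply, inner_add_left, e1, e2, ← Complex.ofReal_add,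
          Complex.ofReal_re]
      calc ‖X z‖ ^ 2 + ‖X.adjoint z‖ ^ 2 = (⟪S z, z⟫_ℂ : ℂ).re := hSz.symm
        _ ≤ ‖(⟪S z, z⟫_ℂ : ℂ)‖ := Complex.re_le_norm _
        _ ≤ ‖S z‖ * ‖z‖ := norm_inner_le_norm _ _
        _ ≤ ‖S‖ * ‖z‖ * ‖z‖ := by
            have := S.le_opNorm z
            nlinarith [norm_nonneg z]
        _ = ‖S‖ := by rw [hz]; ring
    have hcn : (0:ℝ) ≤ ‖(⟪X z, z⟫_ℂ : ℂ)‖ := norm_nonneg _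
    have hsq : ‖(⟪X z, z⟫_ℂ : ℂ)‖ ^ 2 ≤ numRad X ^ 2 := by nlinarith
    rw [hM]
    nlinarith [abs_nonneg a, sq_nonneg a, mul_le_mul_of_nonneg_left h2 (abs_nonneg a),
      mul_le_mul_of_nonneg_left hsq (sq_nonneg a),
      mul_le_mul_of_nonneg_left h3 (by positivity : (0:ℝ) ≤ (|a| + 1) / 2)]
  have hle : numRad (X + (a : ℂ) • X.adjoint) ≤ Real.sqrt M := by
    refine Real.iSup_le (fun z => ?_) (Real.sqrt_nonneg M)
    exact (Real.le_sqrt (norm_nonneg _) hM0).mpr (key z)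
  have hfin : numRad (X + (a : ℂ) • X.adjoint) ^ 2 ≤ M := by
    have h0 := numRad_nonneg' (X + (a : ℂ) • X.adjoint)
    calc numRad (X + (a : ℂ) • X.adjoint) ^ 2 ≤ Real.sqrt M ^ 2 := by nlinarith [Real.sqrt_nonneg M]
      _ = M := Real.sq_sqrt hM0
  exact hfin
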